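/- For a multiindex α = (α_1,...,α_n) of real numbers with α_n + 1 > 0, α_n + α_{n-1} + 2 > 0, ..., α_1 + ... + α_n + n > 0, the integral of t_1^{α_1} ⋯ t_n^{α_n} over the region {0 ≤ t_n ≤ ... ≤ t_1 ≤ 1} ⊂ ℝ^n equals 1 / ((α_n+1)(α_n+α_{n-1}+2) ⋯ (α_1+...+α_n+n)). -/

import Mathlib

open MeasureTheory
open scoped ENNReal

namespace OrderedSimplexAux

noncomputable section

/-- The ordered simplex with upper bound `c`. -/
def S (n : ℕ) (c : ℝ) : Set (Fin n → ℝ) :=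
  {t | (∀ i, 0 ≤ t i ∧ t i ≤ c) ∧ ∀ i j : Fin n, i ≤ j → t j ≤ t i}

lemma measurableSet_S (n : ℕ) (c : ℝ) : MeasurableSet (S n c) := by
  have h1 : MeasurableSet {t : Fin n → ℝ | ∀ i, 0 ≤ t i ∧ t i ≤ c} := by
    rw [Set.setOf_forall]
    exact MeasurableSet.iInter fun i =>
      ((measurableSet_le measurable_const (measurable_pi_apply i)).inter
        (measurableSet_le (measurable_pi_apply i) measurable_const))
  have h2 : MeasurableSet {t : Fin n → ℝ | ∀ i j : Fin n, i ≤ j → t j ≤ t i} := by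
    rw [Set.setOf_forall]
    refine MeasurableSet.iInter fun i => ?_
    rw [Set.setOf_forall]
    refine MeasurableSet.iInter fun j => ?_
    by_cases hij : i ≤ j
    · simp only [hij, forall_true_left]
      exact measurableSet_le (measurable_pi_apply j) (measurable_pi_apply i)
    · simp only [hij, false_implies, Set.setOf_true]
      exact MeasurableSet.univ
  exact h1.inter h2

lemma sum_Ici_succ {n : ℕ} (α : Fin (n + 1) → ℝ) (j : Fin n) :
    ∑ i ∈ Finset.Ici j.succ, α i = ∑ i ∈ Finset.Ici j, α i.succ := by
  have hmap : Finset.Ici j.succ = (Finset.Ici j).map ⟨Fin.succ, Fin.succ_injective n⟩ := by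
    ext i
    simp only [Finset.mem_Ici, Finset.mem_map, Function.Embedding.coeFn_mk]
    constructor
    · intro h
      have hi : i ≠ 0 := by
        intro h0
        rw [h0] at h
        simp [Fin.le_def] at h
      obtain ⟨k, rfl⟩ := Fin.exists_succ_eq.mpr hi
      exact ⟨k, Fin.succ_le_succ_iff.mp h, rfl⟩
    · rintro ⟨k, hk, rfl⟩; exact Fin.succ_le_succ_iff.mpr hk
  rw [hmap, Finset.sum_map]
  rfl

lemma Ici_zero (n : ℕ) : Finset.Ici (0 : Fin (n + 1)) = Finset.univ := by
  ext i; simp [Fin.zero_le]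

lemma lint_rpow {c p : ℝ} (hc : 0 ≤ c) (hp : 0 < p + 1) :
    ∫⁻ x in Set.Ioc 0 c, ENNReal.ofReal (x ^ p) =
      ENNReal.ofReal (c ^ (p + 1) / (p + 1)) := by
  have hint : IntegrableOn (fun x : ℝ => x ^ p) (Set.Ioc 0 c) := by
    have := intervalIntegral.intervalIntegrable_rpow' (r := p) (a := 0) (b := c)
      (by linarith)
    rwa [intervalIntegrable_iff_integrableOn_Ioc_of_le hc] at this
  have hnn : 0 ≤ᵐ[volume.restrict (Set.Ioc 0 c)] fun x : ℝ => x ^ p := by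
    filter_upwards [ae_restrict_mem measurableSet_Ioc] with x hx
    exact Real.rpow_nonneg hx.1.le p
  rw [← ofReal_integral_eq_lintegral_ofReal hint hnn]
  congr 1
  rw [← intervalIntegral.integral_of_le hc,
    integral_rpow (Or.inl (by linarith))]
  rw [Real.zero_rpow (by linarith : p + 1 ≠ 0)]
  ring_nf

lemma measurable_f {n : ℕ} (α : Fin n → ℝ) :
    Measurable fun t : Fin n → ℝ => ∏ j : Fin n, ENNReal.ofReal ((t j) ^ (α j)) := by
  refine Finset.measurable_prod _ fun j _ => ?_
  fun_prop

lemma aux : ∀ (n : ℕ) (α : Fin n → ℝ),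
    (∀ j : Fin n, 0 < (∑ i ∈ Finset.Ici j, α i) + (n - (j : ℝ))) →
    ∀ c : ℝ, 0 ≤ c →
    ∫⁻ t in S n c, ∏ j : Fin n, ENNReal.ofReal ((t j) ^ (α j)) =
      ENNReal.ofReal (c ^ ((∑ i : Fin n, α i) + n)) *
        ∏ j : Fin n, ENNReal.ofReal (1 / ((∑ i ∈ Finset.Ici j, α i) + (n - (j : ℝ)))) := by
  intro n
  induction n with
  | zero =>
      intro α hα c hc
      have hS : S 0 c = Set.univ :=
        Set.eq_univ_of_forall fun t => ⟨fun i => i.elim0, fun i => i.elim0⟩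
      simp only [hS, Finset.univ_eq_empty, Finset.prod_empty, Finset.sum_empty,
        Nat.cast_zero, add_zero, Real.rpow_zero, ENNReal.ofReal_one, mul_one]
      rw [Measure.restrict_univ, lintegral_one]
      simp [MeasureTheory.volume_pi, Measure.pi_univ]
  | succ n IH =>
      intro α hα c hc
      -- notation
      set σ : ℝ := ∑ j : Fin n, α j.succ with hσ
      set C : ℝ≥0∞ := ∏ j : Fin n, ENNReal.ofReal
        (1 / ((∑ i ∈ Finset.Ici j, α i.succ) + (n - (j : ℝ)))) with hC
      have hCne : C ≠ ⊤ := (ENNReal.prod_lt_top fun j _ => ENNReal.ofReal_lt_top).ne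
      have hα' : ∀ j : Fin n, 0 < (∑ i ∈ Finset.Ici j, α i.succ) + (n - (j : ℝ)) := by
        intro j
        have := hα j.succ
        rw [sum_Ici_succ] at this
        have hcast : ((n : ℝ) + 1) - ((j.succ : Fin (n+1)) : ℝ) = (n : ℝ) - (j : ℝ) := by
          push_cast [Fin.val_succ]
          ring
        push_cast at this ⊢
        linarith [this]
      have hS1 := measurableSet_S (n + 1) c
      have hf := measurable_f α
      set f : (Fin (n + 1) → ℝ) → ℝ≥0∞ :=
        fun t => ∏ j : Fin (n + 1), ENNReal.ofReal ((t j) ^ (α j)) with hfdef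
      set e := MeasurableEquiv.piFinSuccAbove (fun _ : Fin (n + 1) => ℝ) 0 with he
      have mp := (volume_preserving_piFinSuccAbove (fun _ : Fin (n + 1) => ℝ) 0).symm
      have hsymm : ∀ (x : ℝ) (y : Fin n → ℝ), e.symm (x, y) = Fin.cons x y := by
        intro x y
        simp [he, MeasurableEquiv.piFinSuccAbove_symm_apply, Fin.insertNth_zero', Fin.consEquiv]
      have hmem : ∀ (x : ℝ) (y : Fin n → ℝ),
          Fin.cons x y ∈ S (n + 1) c ↔ (0 ≤ x ∧ x ≤ c) ∧ y ∈ S n x := by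
        intro x y
        constructor
        · intro h
          refine ⟨by simpa using h.1 0, fun i => ⟨by simpa using (h.1 i.succ).1, ?_⟩,
            fun i j hij => ?_⟩
          · have := h.2 0 i.succ (Fin.zero_le _)
            simpa using this
          · have := h.2 i.succ j.succ (Fin.succ_le_succ_iff.mpr hij)
            simpa using this
        · rintro ⟨⟨hx0, hxc⟩, hy1, hy2⟩
          constructor
          · intro i
            refine Fin.cases ?_ ?_ i
            · simpa using ⟨hx0, hxc⟩
            · intro k
              simpa using ⟨(hy1 k).1, (hy1 k).2.trans hxc⟩
          · intro i j
            refine Fin.cases ?_ ?_ i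
            · refine Fin.cases ?_ ?_ j
              · intro _; exact le_refl _
              · intro k _; simpa using (hy1 k).2
            · intro k
              refine Fin.cases ?_ ?_ j
              · intro h0
                exact absurd h0 (by simp [Fin.le_def])
              · intro l hkl
                simpa using hy2 k l (Fin.succ_le_succ_iff.mp hkl)
      have key : ∀ x : ℝ, (∫⁻ y, (S (n + 1) c).indicator f (Fin.cons x y)) =
          (Set.Icc 0 c).indicator (fun x => ENNReal.ofReal (x ^ α 0) *
            (ENNReal.ofReal (x ^ (σ + n)) * C)) x := by
        intro x
        by_cases hx : x ∈ Set.Icc 0 c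
        · rw [Set.indicator_of_mem hx]
          have h1 : ∀ y : Fin n → ℝ, (S (n + 1) c).indicator f (Fin.cons x y)
              = (S n x).indicator (fun y => ENNReal.ofReal (x ^ α 0) *
                  ∏ j : Fin n, ENNReal.ofReal ((y j) ^ α j.succ)) y := by
            intro y
            by_cases hy : y ∈ S n x
            · rw [Set.indicator_of_mem ((hmem x y).mpr ⟨⟨hx.1, hx.2⟩, hy⟩),
                Set.indicator_of_mem hy]
              simp [hfdef, Fin.prod_univ_succ]
            · rw [Set.indicator_of_notMem (fun hmemS => hy ((hmem x y).mp hmemS).2),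
                Set.indicator_of_notMem hy]
          calc ∫⁻ y, (S (n + 1) c).indicator f (Fin.cons x y)
              = ∫⁻ y, (S n x).indicator (fun y => ENNReal.ofReal (x ^ α 0) *
                  ∏ j : Fin n, ENNReal.ofReal ((y j) ^ α j.succ)) y := lintegral_congr h1
            _ = ∫⁻ y in S n x, ENNReal.ofReal (x ^ α 0) *
                  ∏ j : Fin n, ENNReal.ofReal ((y j) ^ α j.succ) :=
                lintegral_indicator (measurableSet_S n x) _
            _ = ENNReal.ofReal (x ^ α 0) * ∫⁻ y in S n x,
                  ∏ j : Fin n, ENNReal.ofReal ((y j) ^ α j.succ) :=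
                lintegral_const_mul' _ _ ENNReal.ofReal_ne_top
            _ = ENNReal.ofReal (x ^ α 0) * (ENNReal.ofReal (x ^ (σ + n)) * C) := by
                rw [IH (fun i => α i.succ) hα' x hx.1]
        · rw [Set.indicator_of_notMem hx]
          have hz : ∀ y : Fin n → ℝ, (S (n + 1) c).indicator f (Fin.cons x y) = 0 := by
            intro y
            exact Set.indicator_of_notMem
              (fun hmemS => hx (Set.mem_Icc.mpr ((hmem x y).mp hmemS).1)) _
          simp [hz]
      have hsum0 : ∑ i ∈ Finset.Ici (0 : Fin (n + 1)), α i = α 0 + σ := by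
        rw [Ici_zero, Fin.sum_univ_succ, hσ]
      have hp1 : 0 < α 0 + σ + (n : ℝ) + 1 := by
        have h0 := hα 0
        rw [hsum0] at h0
        push_cast [Fin.val_zero] at h0
        linarith
      have main : ∫⁻ t in S (n + 1) c, f t =
          ENNReal.ofReal (c ^ (α 0 + σ + (n : ℝ) + 1) / (α 0 + σ + (n : ℝ) + 1)) * C := by
        calc ∫⁻ t in S (n + 1) c, f t
            = ∫⁻ t, (S (n + 1) c).indicator f t := (lintegral_indicator hS1 f).symm
          _ = ∫⁻ p : ℝ × (Fin n → ℝ), (S (n + 1) c).indicator f (e.symm p) :=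
              (mp.lintegral_comp (hf.indicator hS1)).symm
          _ = ∫⁻ x : ℝ, ∫⁻ y : Fin n → ℝ, (S (n + 1) c).indicator f (e.symm (x, y)) := by
              rw [Measure.volume_eq_prod]
              exact lintegral_prod _ (((hf.indicator hS1).comp e.symm.measurable).aemeasurable)
          _ = ∫⁻ x : ℝ, (Set.Icc 0 c).indicator (fun x => ENNReal.ofReal (x ^ α 0) *
                (ENNReal.ofReal (x ^ (σ + n)) * C)) x := by
              refine lintegral_congr fun x => ?_
              rw [← key x]
              exact lintegral_congr fun y => by rw [hsymm]
          _ = ∫⁻ x in Set.Icc 0 c, ENNReal.ofReal (x ^ α 0) *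
                (ENNReal.ofReal (x ^ (σ + n)) * C) := lintegral_indicator measurableSet_Icc _
          _ = ∫⁻ x in Set.Ioc 0 c, ENNReal.ofReal (x ^ α 0) *
                (ENNReal.ofReal (x ^ (σ + n)) * C) := by
              rw [Measure.restrict_congr_set Ioc_ae_eq_Icc]
          _ = ∫⁻ x in Set.Ioc 0 c, ENNReal.ofReal (x ^ (α 0 + (σ + n))) * C := by
              refine setLIntegral_congr_fun measurableSet_Ioc
                (fun x hx => ?_)
              rw [← mul_assoc, ← ENNReal.ofReal_mul (Real.rpow_nonneg hx.1.le _),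
                ← Real.rpow_add hx.1]
          _ = (∫⁻ x in Set.Ioc 0 c, ENNReal.ofReal (x ^ (α 0 + (σ + n)))) * C :=
              lintegral_mul_const' C _ hCne
          _ = ENNReal.ofReal (c ^ (α 0 + σ + (n : ℝ) + 1) / (α 0 + σ + (n : ℝ) + 1)) * C := by
              rw [lint_rpow hc (by push_cast; linarith)]
              ring_nf
      have hprod : ∏ j : Fin (n + 1), ENNReal.ofReal
          (1 / ((∑ i ∈ Finset.Ici j, α i) + ((n : ℝ) + 1 - (j : ℝ)))) =
          ENNReal.ofReal (1 / (α 0 + σ + (n : ℝ) + 1)) * C := by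
        rw [Fin.prod_univ_succ]
        congr 1
        · rw [hsum0]
          congr 2
          push_cast [Fin.val_zero]
          ring
        · rw [hC]
          refine Finset.prod_congr rfl fun j _ => ?_
          rw [sum_Ici_succ]
          congr 2
          push_cast [Fin.val_succ]
          ring
      rw [main]
      have hofReal : ENNReal.ofReal (c ^ (α 0 + σ + (n : ℝ) + 1) / (α 0 + σ + (n : ℝ) + 1)) =
          ENNReal.ofReal (c ^ (α 0 + σ + (n : ℝ) + 1)) *
            ENNReal.ofReal (1 / (α 0 + σ + (n : ℝ) + 1)) := by
        rw [← ENNReal.ofReal_mul (Real.rpow_nonneg hc _), mul_one_div]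
      push_cast
      rw [show (∑ i : Fin (n + 1), α i) = α 0 + σ from by rw [Fin.sum_univ_succ, hσ]]
      rw [hprod, hofReal, mul_assoc,
        show α 0 + σ + ((n : ℝ) + 1) = α 0 + σ + (n : ℝ) + 1 from by ring]

end

end OrderedSimplexAux


/-- The integral of `t₁^{α₁} ⋯ tₙ^{αₙ}` over the ordered simplex
`{0 ≤ tₙ ≤ … ≤ t₁ ≤ 1}` equals
`1 / ((αₙ+1)(αₙ+αₙ₋₁+2) ⋯ (α₁+…+αₙ+n))`, provided each of those factors is
positive.  The factor associated to the index `j` (zero-based) is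
`∑_{i ≥ j} αᵢ + (n - j)`. -/
theorem ordered_simplex_integral_rpow (n : ℕ) (α : Fin n → ℝ)
    (hα : ∀ j : Fin n, 0 < (∑ i ∈ Finset.Ici j, α i) + (n - (j : ℝ))) :
    ∫ t in {t : Fin n → ℝ |
        (∀ i, 0 ≤ t i ∧ t i ≤ 1) ∧ ∀ i j : Fin n, i ≤ j → t j ≤ t i},
        ∏ j : Fin n, (t j) ^ (α j) =
      1 / ∏ j : Fin n, ((∑ i ∈ Finset.Ici j, α i) + (n - (j : ℝ))) := by

  have hS : MeasurableSet {t : Fin n → ℝ |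
      (∀ i, 0 ≤ t i ∧ t i ≤ 1) ∧ ∀ i j : Fin n, i ≤ j → t j ≤ t i} :=
    OrderedSimplexAux.measurableSet_S n 1
  have hnn : 0 ≤ᵐ[volume.restrict {t : Fin n → ℝ |
      (∀ i, 0 ≤ t i ∧ t i ≤ 1) ∧ ∀ i j : Fin n, i ≤ j → t j ≤ t i}]
      fun t => ∏ j : Fin n, (t j) ^ (α j) := by
    filter_upwards [ae_restrict_mem hS] with t ht
    exact Finset.prod_nonneg fun j _ => Real.rpow_nonneg (ht.1 j).1 _
  have hm : AEStronglyMeasurable (fun t : Fin n → ℝ => ∏ j : Fin n, (t j) ^ (α j))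
      (volume.restrict {t : Fin n → ℝ |
        (∀ i, 0 ≤ t i ∧ t i ≤ 1) ∧ ∀ i j : Fin n, i ≤ j → t j ≤ t i}) := by
    refine Measurable.aestronglyMeasurable ?_
    refine Finset.measurable_prod _ fun j _ => ?_
    fun_prop
  rw [MeasureTheory.integral_eq_lintegral_of_nonneg_ae hnn hm]
  rw [setLIntegral_congr_fun hS (fun t ht =>
    ENNReal.ofReal_prod_of_nonneg fun j _ => Real.rpow_nonneg (ht.1 j).1 (α j))]
  rw [show {t : Fin n → ℝ | (∀ i, 0 ≤ t i ∧ t i ≤ 1) ∧ ∀ i j : Fin n, i ≤ j → t j ≤ t i}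
      = OrderedSimplexAux.S n 1 from rfl]
  rw [OrderedSimplexAux.aux n α hα 1 zero_le_one]
  rw [Real.one_rpow, ENNReal.ofReal_one, one_mul, ENNReal.toReal_prod]
  rw [Finset.prod_congr rfl fun j _ => ENNReal.toReal_ofReal
    (div_nonneg zero_le_one (hα j).le)]
  rw [Finset.prod_div_distrib, Finset.prod_const_one]
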